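/- arXiv:math/0505627 — 2 statements merged into one kernel-verified Lean document; each statement's English description precedes it below -/
import Mathlib

section
/- Let f(x) = d·x (mod 1) on the circle ℝ/ℤ with d ≥ 2, and let B ⊂ S^1 be finite with card(B) ≥ 2 and f injective on B. Then f is orientation preserving on B if and only if the sum of the remainders of the lengths of all holes of B equals 1/d. -/
open MeasureTheory Set Metric Filter Topology

noncomputable section

abbrev S1 := AddCircle (1 : ℝ)

def fd (d : ℕ) : S1 → S1 := fun x => d • x

def len (A : Set S1) : ℝ := (volume A).toReal

def IsHole (B H : Set S1) : Prop := ∃ x ∈ Bᶜ, H = connectedComponentIn Bᶜ x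

def openArc (u w : S1) : Set S1 := {x | SBtw.sbtw u x w}

def OrientPresOn (g : S1 → S1) (B : Set S1) : Prop :=
  Set.InjOn g B ∧ ∀ a ∈ B, ∀ b ∈ B, ∀ c ∈ B, SBtw.sbtw a b c → SBtw.sbtw (g a) (g b) (g c)

def emb (x : S1) : ℂ := (AddCircle.toCircle x : ℂ)

def chord (a b : S1) : Set ℂ := segment ℝ (emb a) (emb b)

def CH (A : Set S1) : Set ℂ := convexHull ℝ (emb '' A)

def Wandering (d N : ℕ) (T : Set S1) : Prop :=
  ∀ i j : ℕ, ((fd d)^[i] '' T).ncard = N ∧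
    (i ≠ j → Disjoint (CH ((fd d)^[i] '' T)) (CH ((fd d)^[j] '' T)))

def IsHoleEnum (B : Set S1) {N : ℕ} (H : Fin N → Set S1) : Prop :=
  Function.Injective H ∧ (∀ k, IsHole B (H k)) ∧ (∀ G, IsHole B G → ∃ k, H k = G) ∧
  ∀ k l : Fin N, k ≤ l → len (H k) ≤ len (H l)

def rem (d : ℕ) (s : ℝ) : ℝ := s - (⌊(d : ℝ) * s⌋ : ℝ) / d

def ImageHoleRel (g : S1 → S1) (H K : Set S1) : Prop :=
  ∃ u w : S1, u ≠ w ∧ H = openArc u w ∧ K = openArc (g u) (g w)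

def InLimitSet (d : ℕ) (T : Set S1) (a b : S1) : Prop :=
  ∃ φ : ℕ → ℕ, StrictMono φ ∧ ∃ u v : ℕ → S1,
    (∀ n, u n ∈ (fd d)^[φ n] '' T ∧ v n ∈ (fd d)^[φ n] '' T) ∧
    Tendsto (fun n => hausdorffDist (chord (u n) (v n)) (chord a b)) atTop (nhds 0)

lemma coe_eq_coe_iff {u v : ℝ} : (↑u : S1) = ↑v ↔ ∃ z : ℤ, u - v = z := by
  rw [QuotientAddGroup.eq_iff_sub_mem]
  constructor
  · rintro h
    obtain ⟨z, hz⟩ := AddSubgroup.mem_zmultiples_iff.mp h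
    exact ⟨z, by simpa using hz.symm⟩
  · rintro ⟨z, hz⟩
    exact AddSubgroup.mem_zmultiples_iff.mpr ⟨z, by simpa using hz.symm⟩

lemma coe_ne_coe {u v : ℝ} (h : u ≠ v) (h2 : |u - v| < 1) : (↑u : S1) ≠ ↑v := by
  rw [Ne, coe_eq_coe_iff]
  rintro ⟨z, hz⟩
  rw [hz] at h2
  have hz0 : z = 0 := by
    have h1 : (-1:ℝ) < z := (abs_lt.mp h2).1
    have h2' : (z:ℝ) < 1 := (abs_lt.mp h2).2
    have : (-1:ℤ) < z := by exact_mod_cast h1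
    have : z < 1 := by exact_mod_cast h2'
    omega
  rw [hz0] at hz
  exact h (sub_eq_zero.mp (by exact_mod_cast hz))

lemma not_modeq_of_ne {u v : ℝ} (h : (↑u : S1) ≠ ↑v) : ¬ v ≡ u [PMOD (1:ℝ)] := by
  rw [AddCommGroup.modEq_iff_eq_mod_zmultiples]
  exact fun hh => h hh.symm

/-- Lemma A: characterization of sbtw via toIcoMod, needing only b,c not ≡ a. -/
lemma sbtw_coe_iff {a b c : ℝ} (hb : (↑b : S1) ≠ ↑a) (hc : (↑c : S1) ≠ ↑a) :
    SBtw.sbtw (↑a : S1) ↑b ↑c ↔ toIcoMod one_pos a b < toIcoMod one_pos a c := by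
  have hb' : toIcoMod one_pos a b = toIocMod one_pos a b :=
    (AddCommGroup.not_modEq_iff_toIcoMod_eq_toIocMod one_pos).mp (not_modeq_of_ne hb)
  have hc' : toIcoMod one_pos a c = toIocMod one_pos a c :=
    (AddCommGroup.not_modEq_iff_toIcoMod_eq_toIocMod one_pos).mp (not_modeq_of_ne hc)
  rw [sbtw_iff_btw_not_btw]
  have h1 : Btw.btw (↑a : S1) ↑b ↑c ↔ toIcoMod one_pos a b ≤ toIocMod one_pos a c :=
    QuotientAddGroup.btw_coe_iff
  have h2 : Btw.btw (↑c : S1) ↑b ↑a ↔ Btw.btw (↑a : S1) ↑c ↑b := by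
    constructor
    · exact fun h => btw_cyclic_left (btw_cyclic_left h)
    · exact fun h => btw_cyclic_left h
  have h3 : Btw.btw (↑a : S1) ↑c ↑b ↔ toIcoMod one_pos a c ≤ toIocMod one_pos a b :=
    QuotientAddGroup.btw_coe_iff
  rw [h1, h2, h3, ← hb', ← hc']
  constructor
  · rintro ⟨h4, h5⟩; exact lt_of_le_of_ne h4 (fun he => h5 (le_of_eq he.symm))
  · intro h4; exact ⟨h4.le, fun h5 => absurd (lt_of_lt_of_le h4 h5) (lt_irrefl _)⟩

/-- Lemma B -/
lemma sbtw_base_iff {δ x y : ℝ} (hx : x ∈ Ico (0:ℝ) 1) (hy : y ∈ Ico (0:ℝ) 1)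
    (hx0 : x ≠ 0) (hy0 : y ≠ 0) :
    SBtw.sbtw (↑δ : S1) ↑(δ + x) ↑(δ + y) ↔ x < y := by
  obtain ⟨hx1, hx2⟩ := hx; obtain ⟨hy1, hy2⟩ := hy
  have hb : (↑(δ + x) : S1) ≠ ↑δ := coe_ne_coe (by intro h; apply hx0; linarith)
    (by rw [abs_lt]; constructor <;> linarith)
  have hc : (↑(δ + y) : S1) ≠ ↑δ := coe_ne_coe (by intro h; apply hy0; linarith)
    (by rw [abs_lt]; constructor <;> linarith)
  rw [sbtw_coe_iff hb hc,
    (toIcoMod_eq_self one_pos).mpr ⟨by linarith, by linarith⟩,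
    (toIcoMod_eq_self one_pos).mpr ⟨by linarith, by linarith⟩]
  constructor <;> intro h <;> linarith

def cyc {n : ℕ} (i j k : Fin n) : Prop := (i < j ∧ j < k) ∨ (j < k ∧ k < i) ∨ (k < i ∧ i < j)

lemma cycLemma {n : ℕ} {θ : Fin n → ℝ} (hθ : StrictMono θ)
    (hw : ∀ i j, θ j < θ i + 1) {i j k : Fin n}
    (hij : i ≠ j) (hik : i ≠ k) (hjk : j ≠ k) :
    SBtw.sbtw (↑(θ i) : S1) ↑(θ j) ↑(θ k) ↔ cyc i j k := by
  have hne : ∀ a b : Fin n, a ≠ b → (↑(θ a) : S1) ≠ ↑(θ b) := fun a b hab =>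
    coe_ne_coe (fun h => hab (hθ.injective h))
      (by rw [abs_lt]; constructor <;> linarith [hw a b, hw b a])
  have hIco : ∀ a b : Fin n, a ≠ b →
      toIcoMod one_pos (θ a) (θ b) = if a < b then θ b else θ b + 1 := by
    intro a b hab
    rcases hab.lt_or_gt with h | h
    · rw [if_pos h, toIcoMod_eq_self]
      exact ⟨(hθ h).le, hw a b⟩
    · rw [if_neg (not_lt.mpr h.le), ← toIcoMod_add_right, toIcoMod_eq_self]
      exact ⟨by linarith [hw b a], by linarith [hθ h]⟩
  rw [sbtw_coe_iff (hne j i hij.symm) (hne k i hik.symm), hIco i j hij, hIco i k hik]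
  unfold cyc
  by_cases h1 : i < j <;> by_cases h2 : i < k
  · simp only [if_pos h1, if_pos h2, hθ.lt_iff_lt]
    constructor
    · intro h; exact Or.inl ⟨h1, h⟩
    · rintro (⟨_, h⟩ | ⟨_, h⟩ | ⟨h, _⟩)
      · exact h
      · exact absurd h2 (not_lt.mpr h.le)
      · exact absurd h2 (not_lt.mpr h.le)
  · simp only [if_pos h1, if_neg h2]
    constructor
    · intro _; exact Or.inr (Or.inr ⟨(not_lt.mp h2).lt_of_ne hik.symm, h1⟩)
    · intro _; linarith [hw k j]
  · simp only [if_neg h1, if_pos h2]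
    constructor
    · intro h; linarith [hw j k]
    · rintro (⟨h, _⟩ | ⟨_, h⟩ | ⟨h, _⟩)
      · exact absurd h h1
      · exact absurd h (not_lt.mpr h2.le)
      · exact absurd h (not_lt.mpr h2.le)
  · simp only [if_neg h1, if_neg h2, add_lt_add_iff_right, hθ.lt_iff_lt]
    constructor
    · intro h; exact Or.inr (Or.inl ⟨h, (not_lt.mp h2).lt_of_ne hik.symm⟩)
    · rintro (⟨h, _⟩ | ⟨h, _⟩ | ⟨_, h⟩)
      · exact absurd h h1
      · exact h
      · exact absurd h h1

open MeasureTheory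

lemma rep_unique {a r s : ℝ} (hr : r ∈ Ico a (a+1)) (hs : s ∈ Ico a (a+1))
    (h : (↑r : S1) = ↑s) : r = s := by
  by_contra hne
  exact coe_ne_coe hne (abs_lt.mpr ⟨by obtain ⟨h1,h2⟩ := hr; obtain ⟨h3,h4⟩ := hs; linarith,
    by obtain ⟨h1,h2⟩ := hr; obtain ⟨h3,h4⟩ := hs; linarith⟩) h

lemma coe_toIcoMod (a b : ℝ) : ((toIcoMod one_pos a b : ℝ) : S1) = ↑b := by
  rw [coe_eq_coe_iff]
  exact ⟨-(toIcoDiv one_pos a b), by simp [toIcoMod]⟩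

lemma arc_eq {a c : ℝ} (h0 : a < c) (h1 : c - a < 1) :
    openArc (↑a) (↑c) = (fun r : ℝ => (↑r : S1)) '' Ioo a c := by
  have hca : (↑c : S1) ≠ ↑a := coe_ne_coe (by intro h; linarith) (abs_lt.mpr ⟨by linarith, h1⟩)
  have hIcoc : toIcoMod one_pos a c = c := (toIcoMod_eq_self one_pos).mpr ⟨h0.le, by linarith⟩
  ext x
  obtain ⟨b, rfl⟩ := QuotientAddGroup.mk_surjective x
  show SBtw.sbtw (↑a : S1) ↑b ↑c ↔ _
  set I := toIcoMod one_pos a b with hI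
  have hIb : ((I : ℝ) : S1) = ↑b := coe_toIcoMod a b
  have hImem : I ∈ Ico a (a+1) := toIcoMod_mem_Ico one_pos a b
  have hRHS : (↑b : S1) ∈ (fun r : ℝ => (↑r : S1)) '' Ioo a c ↔ a < I ∧ I < c := by
    constructor
    · rintro ⟨r, hr, hrb⟩
      have : r = I := rep_unique ⟨hr.1.le, by linarith [hr.2]⟩ hImem (hrb.trans hIb.symm)
      rw [← this]; exact ⟨hr.1, hr.2⟩
    · rintro ⟨ha, hc'⟩
      exact ⟨I, ⟨ha, hc'⟩, hIb⟩
  rw [hRHS]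
  by_cases hba : (↑b : S1) = ↑a
  · rw [hba]
    simp only [sbtw_irrefl_left, false_iff]
    rintro ⟨ha, -⟩
    have : I = a := rep_unique hImem ⟨le_refl a, by linarith⟩ (hIb.trans hba)
    linarith
  · rw [sbtw_coe_iff hba hca, hIcoc, ← hI]
    constructor
    · intro h
      refine ⟨(hImem.1).lt_of_ne (fun he => hba ?_), h⟩
      rw [← hIb, ← he]
    · rintro ⟨-, h⟩; exact h

lemma isOpen_coe_image {s : Set ℝ} (hs : IsOpen s) : IsOpen ((fun r : ℝ => (↑r : S1)) '' s) :=
  QuotientAddGroup.isOpenQuotientMap_mk.isOpenMap _ hs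

lemma vol_coe_Ioo {a c : ℝ} (h0 : a ≤ c) (h1 : c ≤ a + 1) :
    volume ((fun r : ℝ => (↑r : S1)) '' Ioo a c) = ENNReal.ofReal (c - a) := by
  have hmeas : MeasurableSet ((fun r : ℝ => (↑r : S1)) '' Ioo a c) :=
    (isOpen_coe_image isOpen_Ioo).measurableSet
  rw [AddCircle.add_projection_respects_measure (T := 1) a hmeas]
  have : QuotientAddGroup.mk ⁻¹' ((fun r : ℝ => (↑r : S1)) '' Ioo a c) ∩ Ioc a (a + 1) =
      Ioo a c := by
    ext y
    constructor
    · rintro ⟨⟨r, hr, hrb⟩, hy⟩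
      obtain ⟨z, hz⟩ := coe_eq_coe_iff.mp (hrb.symm : ((y : ℝ) : S1) = ↑r)
      have hz0 : z = 0 := by
        have l1 : (z : ℝ) < 1 := by rw [← hz]; obtain ⟨a1, a2⟩ := hy; obtain ⟨b1, b2⟩ := hr; linarith
        have l2 : (-1 : ℝ) < z := by rw [← hz]; obtain ⟨a1, a2⟩ := hy; obtain ⟨b1, b2⟩ := hr; linarith
        have l1' : z < 1 := by exact_mod_cast l1
        have l2' : (-1:ℤ) < z := by exact_mod_cast l2
        omega
      rw [hz0] at hz
      have : y = r := by push_cast at hz; linarith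
      rw [this]; exact hr
    · intro hy
      exact ⟨⟨y, hy, rfl⟩, hy.1, by linarith [hy.2]⟩
  rw [this, Real.volume_Ioo]

section Main
variable {m : ℕ} {β : Fin (m+1) → ℝ}

def sfun (β : Fin (m+1) → ℝ) (k : Fin (m+1)) : ℝ := Int.fract (β (k+1) - β k)

def ArcF (β : Fin (m+1) → ℝ) (k : Fin (m+1)) : Set S1 := openArc ↑(β k) ↑(β (k+1))

lemma beta_lt (hβ : StrictMono β) {k : Fin (m+1)} (hk : k ≠ Fin.last m) : β k < β (k+1) := by
  apply hβ
  have h : k < Fin.last m := lt_of_le_of_ne (Fin.le_last k) hk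
  have := Fin.val_add_one_of_lt h
  rw [Fin.lt_iff_val_lt_val, this]
  omega

lemma beta0_lt_last (hβ : StrictMono β) (hm : 0 < m) : β 0 < β (Fin.last m) := by
  apply hβ
  rw [Fin.lt_iff_val_lt_val]
  simpa using hm

variable (hm : 0 < m) (hβ : StrictMono β) (hβmem : ∀ k, β k ∈ Ico (0:ℝ) 1)
include hm hβ hβmem

lemma s_spec : ∀ k : Fin (m+1), 0 < sfun β k ∧ sfun β k < 1 ∧
    ((↑(β k + sfun β k) : S1) = ↑(β (k+1))) ∧
    (k ≠ Fin.last m → β k + sfun β k = β (k+1)) ∧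
    (k = Fin.last m → β k + sfun β k = β 0 + 1) := by
  intro k
  by_cases hk : k = Fin.last m
  · subst hk
    have h1 : β (Fin.last m + 1) = β 0 := by rw [Fin.last_add_one]
    have h2 : β 0 < β (Fin.last m) := beta0_lt_last hβ hm
    obtain ⟨a1, a2⟩ := hβmem 0
    obtain ⟨b1, b2⟩ := hβmem (Fin.last m)
    have hfl : ⌊β (Fin.last m + 1) - β (Fin.last m)⌋ = -1 := by
      rw [h1, Int.floor_eq_iff]
      constructor <;> [push_cast; push_cast] <;> linarith
    have hs : sfun β (Fin.last m) = β 0 - β (Fin.last m) + 1 := by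
      rw [sfun, Int.fract, hfl, h1]; push_cast; ring
    refine ⟨by rw [hs]; linarith, by rw [hs]; linarith, ?_, fun h => absurd rfl h,
      fun _ => by rw [hs]; ring⟩
    rw [h1]
    rw [coe_eq_coe_iff]
    exact ⟨1, by rw [hs]; push_cast; ring⟩
  · have h2 : β k < β (k+1) := beta_lt hβ hk
    obtain ⟨a1, a2⟩ := hβmem k
    obtain ⟨b1, b2⟩ := hβmem (k+1)
    have hs : sfun β k = β (k+1) - β k := by
      rw [sfun, Int.fract_eq_self.mpr ⟨by linarith, by linarith⟩]
    refine ⟨by rw [hs]; linarith, by rw [hs]; linarith, by rw [hs]; norm_num,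
      fun _ => by rw [hs]; ring, fun h => absurd h hk⟩
lemma arc_img : ∀ k, ArcF β k = (fun r : ℝ => (↑r : S1)) '' Ioo (β k) (β k + sfun β k) := by
  intro k
  obtain ⟨h1, h2, h3, -, -⟩ := s_spec hm hβ hβmem k
  rw [ArcF, ← h3, arc_eq (by linarith) (by linarith)]

lemma len_arc : ∀ k, len (ArcF β k) = sfun β k := by
  intro k
  obtain ⟨h1, h2, -, -, -⟩ := s_spec hm hβ hβmem k
  rw [len, arc_img hm hβ hβmem k, vol_coe_Ioo (by linarith) (by linarith),
    ENNReal.toReal_ofReal (by linarith)]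
  ring

lemma arc_sub_Ioo : ∀ k, Ioo (β k) (β k + sfun β k) ⊆ Ioo (β 0) (β 0 + 1) := by
  intro k r hr
  obtain ⟨h1, h2, -, h4, h5⟩ := s_spec hm hβ hβmem k
  have hb0 : β 0 ≤ β k := hβ.monotone (Fin.zero_le k)
  constructor
  · exact lt_of_le_of_lt hb0 hr.1
  · by_cases hk : k = Fin.last m
    · subst hk; exact (h5 rfl) ▸ hr.2
    · have := h4 hk
      have hlast : β (k+1) ≤ β (Fin.last m) := hβ.monotone (Fin.le_last _)
      obtain ⟨-, c2⟩ := hβmem (Fin.last m)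
      obtain ⟨c1, -⟩ := hβmem 0
      calc r < β k + sfun β k := hr.2
        _ = β (k+1) := this
        _ < β 0 + 1 := by linarith



lemma arc_in_compl {B : Set S1} (hB : B = range (fun k => (↑(β k) : S1))) :
    ∀ k, ArcF β k ⊆ Bᶜ := by
  intro k x hx
  rw [arc_img hm hβ hβmem k] at hx
  obtain ⟨r, hr, rfl⟩ := hx
  rw [hB]
  rintro ⟨j, hj⟩
  obtain ⟨h1, h2, -, h4, h5⟩ := s_spec hm hβ hβmem k
  obtain ⟨z, hz⟩ := coe_eq_coe_iff.mp hj
  obtain ⟨a1, a2⟩ := hβmem j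
  obtain ⟨b1, b2⟩ := hβmem k
  have hz0 : z = 0 ∨ z = -1 := by
    have l1 : (z:ℝ) < 1 := by nlinarith [hr.1, hr.2]
    have l2 : (-2:ℝ) < z := by nlinarith [hr.1, hr.2]
    have l1' : z < 1 := by exact_mod_cast l1
    have l2' : (-2:ℤ) < z := by exact_mod_cast l2
    omega
  rcases hz0 with rfl | rfl
  · have hrj : β j = r := by push_cast at hz; linarith
    by_cases hk : k = Fin.last m
    · subst hk
      have : β j ≤ β (Fin.last m) := hβ.monotone (Fin.le_last j)
      linarith [hr.1]
    · rw [h4 hk] at hr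
      have hjk : k < j := by
        by_contra hc
        exact absurd (hrj ▸ hβ.monotone (not_lt.mp hc)) (not_le.mpr (hrj ▸ hr.1))
      have : k + 1 ≤ j := by
        have hkl : k < Fin.last m := lt_of_le_of_ne (Fin.le_last k) hk
        have hv := Fin.val_add_one_of_lt hkl
        rw [Fin.le_iff_val_le_val, hv]
        exact Fin.lt_iff_val_lt_val.mp hjk
      have := hβ.monotone this
      linarith [hr.2]
  · have hrj : r = β j + 1 := by push_cast at hz; linarith
    by_cases hk : k = Fin.last m
    · subst hk
      rw [h5 rfl] at hr
      have : β 0 ≤ β j := hβ.monotone (Fin.zero_le j)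
      linarith [hr.2]
    · rw [h4 hk] at hr
      have : β (k+1) ≤ β (Fin.last m) := hβ.monotone (Fin.le_last _)
      obtain ⟨-, c2⟩ := hβmem (Fin.last m)
      linarith [hr.2]

lemma compl_cover {B : Set S1} (hB : B = range (fun k => (↑(β k) : S1))) :
    Bᶜ = ⋃ k, ArcF β k := by
  apply subset_antisymm
  · intro x hx
    set r := toIcoMod one_pos (β 0) ((AddCircle.equivIco 1 0 x : ℝ)) with hrdef
    have hrx : (↑r : S1) = x := by
      rw [hrdef, coe_toIcoMod]
      exact (AddCircle.equivIco 1 0).symm_apply_apply x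
    have hrmem : r ∈ Ico (β 0) (β 0 + 1) := toIcoMod_mem_Ico one_pos _ _
    have hrne : ∀ j, r ≠ β j := by
      intro j he
      refine hx (hB ▸ ⟨j, ?_⟩)
      show ((β j : ℝ) : S1) = x
      rw [← he, hrx]
    have h0r : β 0 < r := lt_of_le_of_ne hrmem.1 (Ne.symm (hrne 0))
    set S := Finset.univ.filter (fun k : Fin (m+1) => β k < r) with hS
    have hS0 : (0 : Fin (m+1)) ∈ S := by simp [hS, h0r]
    set k := S.max' ⟨0, hS0⟩ with hk
    have hkS : k ∈ S := S.max'_mem _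
    have hklt : β k < r := by simpa [hS] using hkS
    have hmax : ∀ j, β j < r → j ≤ k := fun j hj =>
      le_of_le_of_eq (S.le_max' j (by simp [hS, hj])) hk.symm
    clear_value k
    rw [mem_iUnion]
    refine ⟨k, ?_⟩
    rw [arc_img hm hβ hβmem k]
    obtain ⟨h1, h2, -, h4, h5⟩ := s_spec hm hβ hβmem k
    by_cases hkl : k = Fin.last m
    · subst hkl
      exact ⟨r, ⟨hklt, by rw [h5 rfl]; linarith [hrmem.2]⟩, hrx⟩
    · refine ⟨r, ⟨hklt, ?_⟩, hrx⟩
      rw [h4 hkl]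
      rcases lt_trichotomy r (β (k+1)) with h | h | h
      · exact h
      · exact absurd h (hrne (k+1))
      · have hc := hmax _ h
        have hkl' : k < Fin.last m := lt_of_le_of_ne (Fin.le_last k) hkl
        have hv := Fin.val_add_one_of_lt hkl'
        have hcc : (k+1 : Fin (m+1)) ≤ k := hc
        rw [Fin.le_iff_val_le_val, hv] at hcc
        omega
  · rw [iUnion_subset_iff]
    exact fun k => arc_in_compl hm hβ hβmem hB k

lemma arcs_disjoint : ∀ k l : Fin (m+1), k ≠ l → Disjoint (ArcF β k) (ArcF β l) := by
  have key : ∀ k l : Fin (m+1), k < l → Disjoint (ArcF β k) (ArcF β l) := by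
    intro k l hkl
    rw [Set.disjoint_iff_inter_eq_empty, eq_empty_iff_forall_notMem]
    intro x hx
    obtain ⟨hx1, hx2⟩ := hx
    rw [arc_img hm hβ hβmem k] at hx1
    rw [arc_img hm hβ hβmem l] at hx2
    obtain ⟨r, hr, rfl⟩ := hx1
    obtain ⟨r', hr', he⟩ := hx2
    have hsub := arc_sub_Ioo hm hβ hβmem
    have hrI := hsub k hr
    have hrI' := hsub l hr'
    have : r' = r := rep_unique ⟨hrI'.1.le, hrI'.2⟩ ⟨hrI.1.le, hrI.2⟩ he
    subst this
    have hkl' : k ≠ Fin.last m := by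
      intro hc; subst hc; exact absurd hkl (not_lt.mpr (Fin.le_last l))
    obtain ⟨-, -, -, h4, -⟩ := s_spec hm hβ hβmem k
    rw [h4 hkl'] at hr
    have hstep : k + 1 ≤ l := by
      have hv := Fin.val_add_one_of_lt (lt_of_le_of_ne (Fin.le_last k) hkl')
      rw [Fin.le_iff_val_le_val, hv]
      exact Fin.lt_iff_val_lt_val.mp hkl
    have := hβ.monotone hstep
    linarith [hr.2, hr'.1]
  intro k l hkl
  rcases hkl.lt_or_gt with h | h
  · exact key k l h
  · exact (key l k h).symm

lemma arc_nonempty : ∀ k, (ArcF β k).Nonempty := by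
  intro k
  obtain ⟨h1, h2, -, -, -⟩ := s_spec hm hβ hβmem k
  rw [arc_img hm hβ hβmem k]
  exact ⟨_, ⟨β k + sfun β k / 2, ⟨by linarith, by linarith⟩, rfl⟩⟩

lemma arc_isOpen : ∀ k, IsOpen (ArcF β k) := by
  intro k
  rw [arc_img hm hβ hβmem k]
  exact isOpen_coe_image isOpen_Ioo

lemma arc_isPreconnected : ∀ k, IsPreconnected (ArcF β k) := by
  intro k
  rw [arc_img hm hβ hβmem k]
  exact (isPreconnected_Ioo).image _ (continuous_quotient_mk'.continuousOn)

lemma ccIn_arc {B : Set S1} (hB : B = range (fun k => (↑(β k) : S1)))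
    {x : S1} {k : Fin (m+1)} (hx : x ∈ ArcF β k) :
    connectedComponentIn Bᶜ x = ArcF β k := by
  have hcov := compl_cover hm hβ hβmem hB
  apply subset_antisymm
  · set V := ⋃ l ∈ {l : Fin (m+1) | l ≠ k}, ArcF β l with hV
    have hdisjV : Disjoint (ArcF β k) V := by
      rw [hV, disjoint_iff_inter_eq_empty, eq_empty_iff_forall_notMem]
      rintro y ⟨hy1, hy2⟩
      simp only [mem_iUnion] at hy2
      obtain ⟨l, hl, hy2⟩ := hy2
      exact (Set.disjoint_left.mp (arcs_disjoint hm hβ hβmem k l (Ne.symm hl)) hy1 hy2).elim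
    apply IsPreconnected.subset_left_of_subset_union (arc_isOpen hm hβ hβmem k)
      (isOpen_biUnion (fun l _ => arc_isOpen hm hβ hβmem l)) hdisjV
    · intro y hy
      have hyU := connectedComponentIn_subset Bᶜ x hy
      rw [hcov, mem_iUnion] at hyU
      obtain ⟨l, hl⟩ := hyU
      by_cases hlk : l = k
      · exact Or.inl (hlk ▸ hl)
      · exact Or.inr (by simp only [hV, mem_iUnion]; exact ⟨l, hlk, hl⟩)
    · exact ⟨x, mem_connectedComponentIn (by rw [hcov]; exact mem_iUnion.mpr ⟨k, hx⟩), hx⟩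
    · exact isPreconnected_connectedComponentIn
  · exact (arc_isPreconnected hm hβ hβmem k).subset_connectedComponentIn hx
      (by rw [hcov]; exact subset_iUnion _ k)

lemma hole_is_arc {B : Set S1} (hB : B = range (fun k => (↑(β k) : S1)))
    {G : Set S1} (hG : IsHole B G) : ∃ k, G = ArcF β k := by
  obtain ⟨x, hx, rfl⟩ := hG
  have hxU : x ∈ ⋃ k, ArcF β k := by rw [← compl_cover hm hβ hβmem hB]; exact hx
  rw [mem_iUnion] at hxU
  obtain ⟨k, hk⟩ := hxU
  exact ⟨k, ccIn_arc hm hβ hβmem hB hk⟩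

def Ffun (d : ℕ) (β : Fin (m+1) → ℝ) (k : Fin (m+1)) : ℝ := Int.fract (d * (β k - β 0))

omit hm hβ hβmem in
lemma fd_coe (d : ℕ) (r : ℝ) : fd d ↑r = ↑((d:ℝ) * r) := by
  show d • (↑r : S1) = _
  have h : ((d:ℝ) * r) = d • r := by rw [nsmul_eq_mul]
  rw [h]
  exact ((QuotientAddGroup.mk' _).map_nsmul d r).symm

omit hm hβ hβmem in
lemma fd_beta_eq (d : ℕ) (k : Fin (m+1)) :
    fd d ↑(β k) = ↑((d:ℝ) * β 0 + Ffun d β k) := by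
  rw [fd_coe, coe_eq_coe_iff]
  refine ⟨⌊(d:ℝ) * (β k - β 0)⌋, ?_⟩
  have hF : Ffun d β k = (d:ℝ) * (β k - β 0) - ⌊(d:ℝ) * (β k - β 0)⌋ := rfl
  rw [hF]
  ring

omit hm hβmem in
lemma F_inj {d : ℕ} {B : Set S1} (hβmem : ∀ k, β k ∈ Ico (0:ℝ) 1)
    (hB : B = range (fun k => (↑(β k) : S1))) (hinj : Set.InjOn (fd d) B) :
    Function.Injective (Ffun d β) := by
  intro i j h
  have h2 : fd d ↑(β i) = fd d ↑(β j) := by rw [fd_beta_eq, fd_beta_eq, h]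
  have h3 : (↑(β i) : S1) = ↑(β j) :=
    hinj (by rw [hB]; exact ⟨i, rfl⟩) (by rw [hB]; exact ⟨j, rfl⟩) h2
  have h4 : β i = β j := by
    apply rep_unique (a := 0) _ _ h3
    · rw [zero_add]; exact hβmem i
    · rw [zero_add]; exact hβmem j
  exact hβ.injective h4

lemma op_iff_mono {d : ℕ} {B : Set S1}
    (hB : B = range (fun k => (↑(β k) : S1))) (hinj : Set.InjOn (fd d) B) :
    OrientPresOn (fd d) B ↔ StrictMono (Ffun d β) := by
  have hFinj := F_inj hβ hβmem hB hinj
  have hF0 : Ffun d β 0 = 0 := by simp [Ffun]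
  have hFmem : ∀ k, Ffun d β k ∈ Ico (0:ℝ) 1 :=
    fun k => ⟨Int.fract_nonneg _, Int.fract_lt_one _⟩
  have hFne : ∀ k : Fin (m+1), k ≠ 0 → Ffun d β k ≠ 0 :=
    fun k hk h => hk (hFinj (h.trans hF0.symm))
  have hwβ : ∀ i j, β j < β i + 1 := by
    intro i j; obtain ⟨a1, a2⟩ := hβmem i; obtain ⟨b1, b2⟩ := hβmem j; linarith
  constructor
  · intro hOP
    have key : ∀ j k : Fin (m+1), j ≠ 0 → k ≠ 0 → j < k → Ffun d β j < Ffun d β k := by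
      intro j k hj0 hk0 hjk
      have hj0' : (0 : Fin (m+1)) < j := Fin.pos_iff_ne_zero.mpr hj0
      have h1 : SBtw.sbtw (↑(β 0) : S1) ↑(β j) ↑(β k) :=
        (cycLemma hβ hwβ (Ne.symm hj0) (Ne.symm hk0) (ne_of_lt hjk)).mpr
          (Or.inl ⟨hj0', hjk⟩)
      have h2 := hOP.2 _ (by rw [hB]; exact ⟨0, rfl⟩) _ (by rw [hB]; exact ⟨j, rfl⟩)
        _ (by rw [hB]; exact ⟨k, rfl⟩) h1
      rw [fd_beta_eq, fd_beta_eq, fd_beta_eq, hF0, add_zero] at h2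
      exact (sbtw_base_iff (hFmem j) (hFmem k) (hFne j hj0) (hFne k hk0)).mp h2
    intro i j hij
    by_cases hi0 : i = 0
    · subst hi0
      rw [hF0]
      exact ((hFmem j).1).lt_of_ne (Ne.symm (hFne j (Fin.pos_iff_ne_zero.mp hij)))
    · exact key i j hi0 (Fin.pos_iff_ne_zero.mp (lt_trans (Fin.pos_iff_ne_zero.mpr hi0) hij)) hij
  · intro hF
    refine ⟨hinj, ?_⟩
    intro a ha b hb c hcm hsbtw
    rw [hB] at ha hb hcm
    obtain ⟨i, rfl⟩ := ha
    obtain ⟨j, rfl⟩ := hb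
    obtain ⟨k, rfl⟩ := hcm
    simp only at hsbtw ⊢
    have hij : i ≠ j := by rintro rfl; exact sbtw_irrefl_left hsbtw
    have hik : i ≠ k := by rintro rfl; exact sbtw_irrefl_left_right hsbtw
    have hjk : j ≠ k := by rintro rfl; exact sbtw_irrefl_right hsbtw
    have hcyc := (cycLemma hβ hwβ hij hik hjk).mp hsbtw
    rw [fd_beta_eq, fd_beta_eq, fd_beta_eq]
    have hθ : StrictMono (fun k => (d:ℝ) * β 0 + Ffun d β k) :=
      fun a b h => by
        show (d:ℝ) * β 0 + Ffun d β a < (d:ℝ) * β 0 + Ffun d β b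
        linarith [hF h]
    have hwθ : ∀ i j : Fin (m+1), (d:ℝ) * β 0 + Ffun d β j < ((d:ℝ) * β 0 + Ffun d β i) + 1 := by
      intro i j
      obtain ⟨a1, a2⟩ := hFmem i; obtain ⟨b1, b2⟩ := hFmem j
      linarith
    exact (cycLemma hθ hwθ hij hik hjk).mpr hcyc

omit hm hβ hβmem in
lemma castSucc_add_one (k : Fin m) : (k.castSucc : Fin (m+1)) + 1 = k.succ := by
  have h : k.castSucc < Fin.last m := Fin.castSucc_lt_last k
  apply Fin.ext
  rw [Fin.val_add_one_of_lt h]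
  simp

lemma sum_fract_eq {d : ℕ} {B : Set S1}
    (hB : B = range (fun k => (↑(β k) : S1))) (hinj : Set.InjOn (fd d) B) :
    ∑ k, Int.fract ((d:ℝ) * sfun β k) =
      (∑ k : Fin m, Int.fract (Ffun d β k.succ - Ffun d β k.castSucc)) +
        (1 - Ffun d β (Fin.last m)) := by
  have hFinj := F_inj hβ hβmem hB hinj
  have hF0 : Ffun d β 0 = 0 := by simp [Ffun]
  have hpt : ∀ k, Int.fract ((d:ℝ) * sfun β k) =
      Int.fract (Ffun d β (k+1) - Ffun d β k) := by
    intro k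
    rw [Int.fract_eq_fract]
    refine ⟨-(d * ⌊β (k+1) - β k⌋) + ⌊(d:ℝ) * (β (k+1) - β 0)⌋ - ⌊(d:ℝ) * (β k - β 0)⌋, ?_⟩
    simp only [sfun, Ffun, Int.fract]
    push_cast
    ring
  rw [Fin.sum_univ_castSucc (f := fun k => Int.fract ((d:ℝ) * sfun β k))]
  have hA : ∀ k : Fin m, Int.fract ((d:ℝ) * sfun β (Fin.castSucc k)) =
      Int.fract (Ffun d β k.succ - Ffun d β k.castSucc) := by
    intro k
    rw [hpt, castSucc_add_one]
  have hlne : (Fin.last m) ≠ 0 := by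
    intro hc
    have hcv := congrArg Fin.val hc
    simp at hcv
    omega
  have hFl : Ffun d β (Fin.last m) ≠ 0 :=
    fun h => hlne (hFinj (h.trans hF0.symm))
  have hff : Int.fract (Ffun d β (Fin.last m)) = Ffun d β (Fin.last m) := by
    simp only [Ffun, Int.fract_fract]
  have hBt : Int.fract ((d:ℝ) * sfun β (Fin.last m)) = 1 - Ffun d β (Fin.last m) := by
    rw [hpt, Fin.last_add_one, hF0, zero_sub, Int.fract_neg (by rw [hff]; exact hFl), hff]
  rw [Finset.sum_congr rfl (fun k _ => hA k), hBt]

lemma mono_iff_sum {d : ℕ} {B : Set S1}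
    (hB : B = range (fun k => (↑(β k) : S1))) (hinj : Set.InjOn (fd d) B) :
    StrictMono (Ffun d β) ↔ ∑ k, Int.fract ((d:ℝ) * sfun β k) = 1 := by
  have hFinj := F_inj hβ hβmem hB hinj
  have hF0 : Ffun d β 0 = 0 := by simp [Ffun]
  have hFmem : ∀ k, Ffun d β k ∈ Ico (0:ℝ) 1 :=
    fun k => ⟨Int.fract_nonneg _, Int.fract_lt_one _⟩
  set F := Ffun d β with hFdef
  have htel : ∑ k : Fin m, (F k.succ - F k.castSucc) = F (Fin.last m) - F 0 := by
    set G : ℕ → ℝ := fun n => F ⟨min n m, by omega⟩ with hG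
    have h1 : ∀ k : Fin m, F k.succ - F k.castSucc = G (k.val + 1) - G k.val := by
      intro k
      have e1 : G (k.val + 1) = F k.succ := by
        simp only [hG]
        congr 1
        apply Fin.ext
        simp [Nat.min_eq_left (Nat.succ_le_of_lt k.isLt)]
      have e2 : G k.val = F k.castSucc := by
        simp only [hG]
        congr 1
        apply Fin.ext
        simp [Nat.min_eq_left (le_of_lt k.isLt)]
      rw [e1, e2]
    calc ∑ k : Fin m, (F k.succ - F k.castSucc)
        = ∑ k : Fin m, (G (k.val + 1) - G k.val) := Finset.sum_congr rfl (fun k _ => h1 k)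
      _ = ∑ i ∈ Finset.range m, (G (i + 1) - G i) :=
          Fin.sum_univ_eq_sum_range (fun i => G (i+1) - G i) m
      _ = G m - G 0 := Finset.sum_range_sub G m
      _ = F (Fin.last m) - F 0 := by
          have e3 : G m = F (Fin.last m) := by
            simp only [hG]; congr 1; apply Fin.ext; simp [Fin.last]
          have e4 : G 0 = F 0 := by
            simp only [hG]; congr 1
          rw [e3, e4]
  rw [sum_fract_eq hm hβ hβmem hB hinj]
  constructor
  · intro hF
    have hself : ∀ k : Fin m, Int.fract (F k.succ - F k.castSucc) = F k.succ - F k.castSucc := by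
      intro k
      apply Int.fract_eq_self.mpr
      have h1 : F k.castSucc < F k.succ := hF Fin.castSucc_lt_succ
      obtain ⟨a1, a2⟩ := hFmem k.succ; obtain ⟨b1, b2⟩ := hFmem k.castSucc
      exact ⟨by linarith, by linarith⟩
    rw [Finset.sum_congr rfl (fun k _ => hself k), htel, hF0]
    ring
  · intro hsum
    by_contra hns
    obtain ⟨k0, hk0⟩ := not_forall.mp ((Fin.strictMono_iff_lt_succ (f := F)).not.mp hns)
    have hk0' : F k0.succ < F k0.castSucc := by
      rcases lt_trichotomy (F k0.castSucc) (F k0.succ) with h | h | h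
      · exact absurd h hk0
      · exact absurd (hFinj h) (by simp [Fin.ext_iff])
      · exact h
    have hle : ∀ k : Fin m, F k.succ - F k.castSucc ≤ Int.fract (F k.succ - F k.castSucc) := by
      intro k
      rw [Int.fract]
      have hfl : ⌊F k.succ - F k.castSucc⌋ ≤ 0 := by
        have hlt1 : F k.succ - F k.castSucc < 1 := by
          obtain ⟨a1, a2⟩ := hFmem k.succ; obtain ⟨b1, b2⟩ := hFmem k.castSucc
          linarith
        have := Int.floor_lt.mpr (show F k.succ - F k.castSucc < ((1:ℤ):ℝ) by push_cast; linarith)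
        omega
      have hfl' : (⌊F k.succ - F k.castSucc⌋ : ℝ) ≤ 0 := by exact_mod_cast hfl
      linarith
    have hlt : F k0.succ - F k0.castSucc < Int.fract (F k0.succ - F k0.castSucc) := by
      have hfl : ⌊F k0.succ - F k0.castSucc⌋ = -1 := by
        rw [Int.floor_eq_iff]
        obtain ⟨a1, a2⟩ := hFmem k0.succ; obtain ⟨b1, b2⟩ := hFmem k0.castSucc
        constructor <;> push_cast <;> linarith
      rw [Int.fract, hfl]
      push_cast
      linarith
    have hbig : F (Fin.last m) - F 0 < ∑ k : Fin m, Int.fract (F k.succ - F k.castSucc) := by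
      rw [← htel]
      exact Finset.sum_lt_sum (fun i _ => hle i) ⟨k0, Finset.mem_univ _, hlt⟩
    rw [hF0] at hbig
    obtain ⟨a1, a2⟩ := hFmem (Fin.last m)
    linarith

end Main


/-- orientation preserving iff sum of remainders of hole lengths is 1/d. -/
theorem stmt1 (d M : ℕ) (hd : 2 ≤ d) (B : Set S1) (hBfin : B.Finite)
    (hM : B.ncard = M) (hM2 : 2 ≤ M)
    (hinj : Set.InjOn (fd d) B)
    (H : Fin M → Set S1) (henum : IsHoleEnum B H) :
    OrientPresOn (fd d) B ↔ ∑ k, rem d (len (H k)) = 1 / d := by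
  classical
  obtain ⟨m, rfl⟩ : ∃ m, M = m + 1 := ⟨M - 1, by omega⟩
  have hm : 0 < m := by omega
  set Bf := hBfin.toFinset with hBf
  set Rf := Bf.image (fun x => (AddCircle.equivIco 1 0 x : ℝ)) with hRf
  have hRinj : Function.Injective (fun x : S1 => (AddCircle.equivIco 1 0 x : ℝ)) := by
    intro x y h
    exact (AddCircle.equivIco 1 0).injective (Subtype.coe_injective h)
  have hcard : Rf.card = m + 1 := by
    rw [hRf, Finset.card_image_of_injective _ hRinj, hBf,
      ← Set.ncard_eq_toFinset_card _ hBfin, hM]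
  set oI := Rf.orderIsoOfFin hcard with hoI
  set β : Fin (m+1) → ℝ := fun k => (oI k : ℝ) with hβdef
  have hβ : StrictMono β := fun i j h => Subtype.coe_lt_coe.mpr (oI.strictMono h)
  have hmemRf : ∀ k, β k ∈ Rf := fun k => (oI k).2
  have hβmem : ∀ k, β k ∈ Ico (0:ℝ) 1 := by
    intro k
    obtain ⟨x, hx, he⟩ := Finset.mem_image.mp (hmemRf k)
    rw [← he]
    simpa using (AddCircle.equivIco 1 0 x).2
  have hcoe_eq : ∀ x : S1, ((AddCircle.equivIco 1 0 x : ℝ) : S1) = x :=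
    fun x => (AddCircle.equivIco 1 0).symm_apply_apply x
  have hB : B = range (fun k => (↑(β k) : S1)) := by
    apply subset_antisymm
    · intro x hx
      have hmem : (AddCircle.equivIco 1 0 x : ℝ) ∈ Rf :=
        Finset.mem_image_of_mem _ (hBfin.mem_toFinset.mpr hx)
      obtain ⟨k, hk⟩ := oI.surjective ⟨_, hmem⟩
      refine ⟨k, ?_⟩
      show (↑(β k) : S1) = x
      rw [hβdef]
      simp only
      rw [hk]
      exact hcoe_eq x
    · rintro x ⟨k, rfl⟩
      obtain ⟨y, hy, he⟩ := Finset.mem_image.mp (hmemRf k)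
      show ((β k : ℝ) : S1) ∈ B
      rw [← he, hcoe_eq y]
      exact hBfin.mem_toFinset.mp hy
  obtain ⟨Hinj, Hhole, Hsurj, -⟩ := henum
  have he : ∀ k, ∃ j, H k = ArcF β j := fun k => hole_is_arc hm hβ hβmem hB (Hhole k)
  choose e hespec using he
  have einj : Function.Injective e := by
    intro i j h
    apply Hinj
    rw [hespec i, hespec j, h]
  have ebij := Finite.injective_iff_bijective.mp einj
  have hsum1 : ∑ k, rem d (len (H k)) = ∑ k, rem d (len (ArcF β k)) :=
    Fintype.sum_bijective e ebij _ _ (fun k => by rw [hespec k])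
  have hd0 : (d:ℝ) ≠ 0 := Nat.cast_ne_zero.mpr (by omega)
  have hrem : ∀ k, rem d (len (ArcF β k)) = Int.fract ((d:ℝ) * sfun β k) / d := by
    intro k
    rw [len_arc hm hβ hβmem k, rem]
    have hfr : Int.fract ((d:ℝ) * sfun β k) = (d:ℝ) * sfun β k - ⌊(d:ℝ) * sfun β k⌋ := rfl
    rw [hfr, sub_div, mul_div_cancel_left₀ _ hd0]
  rw [op_iff_mono hm hβ hβmem hB hinj, mono_iff_sum hm hβ hβmem hB hinj, hsum1,
    Finset.sum_congr rfl (fun k _ => hrem k), ← Finset.sum_div]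
  constructor
  · intro h
    rw [h]
  · intro h
    have h2 := congrArg (fun t : ℝ => t * d) h
    simpa [div_mul_cancel₀, hd0] using h2
end
end

section
/- If T ⊂ S^1 forms a wandering N-gon under f(z) = z^d (d ≥ 2, N ≥ 3), then for each k with 1 ≤ k ≤ N − 2, the length s_k(T_i) of the k-th smallest hole of T_i = f^i(T) tends to 0 as i → ∞. -/
open MeasureTheory Set Metric Filter Topology

noncomputable section

set_option maxHeartbeats 1000000

-- ===== auxiliary lemmas =====

theorem aux_trig1 (a b : ℝ) : Real.sin (2*a) + Real.sin (2*b) - Real.sin (2*a + 2*b) =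
    4 * Real.sin a * Real.sin b * Real.sin (a+b) := by
  rw [show (2:ℝ)*a + 2*b = (a+b)+(a+b) by ring, show (2:ℝ)*a = a + a by ring,
    show (2:ℝ)*b = b + b by ring, Real.sin_add (a+b), Real.sin_add a b, Real.cos_add a b,
    Real.sin_add a a, Real.sin_add b b]
  linear_combination (-2*Real.sin a*Real.cos a) * Real.sin_sq_add_cos_sq b +
    (-2*Real.sin b*Real.cos b) * Real.sin_sq_add_cos_sq a

theorem aux_sin_lb {δ x : ℝ} (h0 : 0 < δ) (hhalf : δ ≤ Real.pi/2) (hδ : δ ≤ x)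
    (hx : x ≤ Real.pi - δ) : Real.sin δ ≤ Real.sin x := by
  rcases le_total x (Real.pi/2) with h | h
  · exact Real.strictMonoOn_sin.monotoneOn ⟨by linarith [Real.pi_pos], hhalf⟩
      ⟨by linarith [Real.pi_pos], h⟩ hδ
  · rw [← Real.sin_pi_sub x]
    exact Real.strictMonoOn_sin.monotoneOn ⟨by linarith [Real.pi_pos], hhalf⟩
      ⟨by linarith [Real.pi_pos], by linarith⟩ (by linarith)

def det2 (z w : ℂ) : ℝ := z.re * w.im - z.im * w.re

theorem aux_det2_exp (A B C : ℝ) :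
    det2 (Complex.exp (B*Complex.I) - Complex.exp (A*Complex.I))
      (Complex.exp (C*Complex.I) - Complex.exp (A*Complex.I)) =
      4 * Real.sin ((B-A)/2) * Real.sin ((C-B)/2) * Real.sin ((C-A)/2) := by
  have key : ∀ t : ℝ, Complex.exp (t*Complex.I) =
      Complex.ofReal (Real.cos t) + Complex.ofReal (Real.sin t) * Complex.I := by
    intro t
    rw [Complex.exp_mul_I, Complex.ofReal_cos, Complex.ofReal_sin]
  have h := aux_trig1 ((B-A)/2) ((C-B)/2)
  rw [show 2*((B-A)/2) + 2*((C-B)/2) = C - A by ring, show 2*((B-A)/2) = B - A by ring,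
    show 2*((C-B)/2) = C-B by ring, show (B-A)/2 + (C-B)/2 = (C-A)/2 by ring] at h
  simp only [det2, key, Complex.add_re, Complex.sub_re, Complex.add_im, Complex.sub_im,
    Complex.ofReal_re, Complex.ofReal_im, Complex.mul_re, Complex.mul_im, Complex.I_re,
    Complex.I_im]
  rw [← h, Real.sin_sub, Real.sin_sub, Real.sin_sub]
  ring

theorem aux_bary_sum (p q r z : ℂ) :
    det2 (q-z) (r-z) + det2 (r-z) (p-z) + det2 (p-z) (q-z) = det2 (q-p) (r-p) := by
  simp only [det2, Complex.sub_re, Complex.sub_im]; ring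

theorem aux_bary_combo (p q r z : ℂ) :
    (det2 (q-z) (r-z) : ℂ) * p + (det2 (r-z) (p-z) : ℂ) * q + (det2 (p-z) (q-z) : ℂ) * r
      = (det2 (q-p) (r-p) : ℂ) * z := by
  simp only [Complex.ext_iff, det2, Complex.add_re, Complex.add_im, Complex.mul_re, Complex.mul_im,
    Complex.ofReal_re, Complex.ofReal_im, Complex.sub_re, Complex.sub_im]
  constructor <;> ring

theorem aux_mem_triangle {p q r z : ℂ} (hD : 0 < det2 (q-p) (r-p))
    (h1 : 0 ≤ det2 (q-z) (r-z)) (h2 : 0 ≤ det2 (r-z) (p-z)) (h3 : 0 ≤ det2 (p-z) (q-z)) :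
    z ∈ convexHull ℝ ({p, q, r} : Set ℂ) := by
  classical
  set w : Fin 3 → ℝ := ![det2 (q-z) (r-z), det2 (r-z) (p-z), det2 (p-z) (q-z)] with hw
  set pts : Fin 3 → ℂ := ![p, q, r] with hpts
  have hsum : ∑ i, w i = det2 (q-p) (r-p) := by
    rw [Fin.sum_univ_three, ← aux_bary_sum p q r z]; simp [hw]
  have hmem : Finset.univ.centerMass w pts ∈ convexHull ℝ ({p, q, r} : Set ℂ) := by
    apply Finset.centerMass_mem_convexHull
    · intro i _; fin_cases i <;> simpa [hw]
    · rw [hsum]; exact hD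
    · intro i _; fin_cases i <;> simp [hpts]
  have hcm : Finset.univ.centerMass w pts = z := by
    rw [Finset.centerMass, hsum, Fin.sum_univ_three]
    have h5 : w 0 • pts 0 + w 1 • pts 1 + w 2 • pts 2 = (det2 (q-p) (r-p) : ℂ) * z := by
      simp only [hw, hpts, Matrix.cons_val_zero, Matrix.cons_val_one, Matrix.head_cons,
        Matrix.cons_val_two, Matrix.tail_cons]
      rw [← aux_bary_combo p q r z]
      simp [Complex.real_smul]
    rw [h5, Complex.real_smul]
    rw [Complex.ofReal_inv, ← mul_assoc,
      inv_mul_cancel₀ (by exact_mod_cast hD.ne' : (det2 (q-p) (r-p) : ℂ) ≠ 0), one_mul]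
  rwa [hcm] at hmem

theorem aux_abs_det2_le (z w : ℂ) : |det2 z w| ≤ 2 * ‖z‖ * ‖w‖ := by
  have h1 := Complex.abs_re_le_norm z; have h2 := Complex.abs_im_le_norm z
  have h3 := Complex.abs_re_le_norm w; have h4 := Complex.abs_im_le_norm w
  have e1 : |z.re * w.im| ≤ ‖z‖ * ‖w‖ := by
    rw [abs_mul]; exact mul_le_mul h1 h4 (abs_nonneg _) (norm_nonneg z)
  have e2 : |z.im * w.re| ≤ ‖z‖ * ‖w‖ := by
    rw [abs_mul]; exact mul_le_mul h2 h3 (abs_nonneg _) (norm_nonneg z)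
  rw [abs_le] at e1 e2 ⊢
  constructor <;> [skip; skip] <;> simp only [det2] <;> linarith [e1.1, e1.2, e2.1, e2.2]

theorem aux_square_subset_triangle {p q r : ℂ} (hp : ‖p‖ ≤ 1) (hq : ‖q‖ ≤ 1)
    (hr : ‖r‖ ≤ 1) (hD : 0 < det2 (q-p) (r-p)) {z : ℂ}
    (hre : |(3*z - (p+q+r)).re| ≤ det2 (q-p) (r-p) / 16)
    (him : |(3*z - (p+q+r)).im| ≤ det2 (q-p) (r-p) / 16) :
    z ∈ convexHull ℝ ({p, q, r} : Set ℂ) := by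
  set D := det2 (q-p) (r-p) with hDdef
  set w : ℂ := 3*z - (p+q+r) with hw
  have hwabs : ‖w‖ ≤ D / 8 := by
    calc ‖w‖ ≤ |w.re| + |w.im| := Complex.norm_le_abs_re_add_abs_im w
    _ ≤ D/16 + D/16 := add_le_add hre him
    _ = D/8 := by ring
  have key : ∀ u v : ℂ, ‖u‖ ≤ 1 → ‖v‖ ≤ 1 →
      |det2 (v - u) w| ≤ D / 2 := by
    intro u v hu hv
    calc |det2 (v-u) w| ≤ 2 * ‖v-u‖ * ‖w‖ := aux_abs_det2_le _ _
    _ ≤ 2 * 2 * (D/8) := by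
        apply mul_le_mul _ hwabs (norm_nonneg w)
        · positivity
        · apply mul_le_mul_of_nonneg_left _ (by norm_num)
          calc ‖v - u‖ ≤ ‖v‖ + ‖u‖ := by
                exact norm_sub_le v u
          _ ≤ 2 := by linarith
    _ = D/2 := by ring
  apply aux_mem_triangle hD
  · have hid : 3 * det2 (q-z) (r-z) = D + det2 (r - q) w := by
      simp only [hDdef, hw, det2, Complex.sub_re, Complex.sub_im, Complex.add_re, Complex.add_im,
        Complex.mul_re, Complex.mul_im, Complex.re_ofNat, Complex.im_ofNat]
      ring
    have := (abs_le.mp (key q r hq hr)).1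
    nlinarith [hD]
  · have hid : 3 * det2 (r-z) (p-z) = D + det2 (p - r) w := by
      simp only [hDdef, hw, det2, Complex.sub_re, Complex.sub_im, Complex.add_re, Complex.add_im,
        Complex.mul_re, Complex.mul_im, Complex.re_ofNat, Complex.im_ofNat]
      ring
    have := (abs_le.mp (key r p hr hp)).1
    nlinarith [hD]
  · have hid : 3 * det2 (p-z) (q-z) = D + det2 (q - p) w := by
      simp only [hDdef, hw, det2, Complex.sub_re, Complex.sub_im, Complex.add_re, Complex.add_im,
        Complex.mul_re, Complex.mul_im, Complex.re_ofNat, Complex.im_ofNat]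
      ring
    have := (abs_le.mp (key p q hp hq)).1
    nlinarith [hD]

theorem aux_volume_triangle_lb {p q r : ℂ} (hp : ‖p‖ ≤ 1) (hq : ‖q‖ ≤ 1)
    (hr : ‖r‖ ≤ 1) (hD : 0 < det2 (q-p) (r-p)) :
    ENNReal.ofReal ((det2 (q-p) (r-p) / 24)^2) ≤ volume (convexHull ℝ ({p, q, r} : Set ℂ)) := by
  set D := det2 (q-p) (r-p) with hDdef
  set cr : ℝ := (p+q+r).re / 3 with hcr
  set ci : ℝ := (p+q+r).im / 3 with hci
  set s : ℝ := D/48 with hs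
  set S : Set ℂ := {z : ℂ | z.re ∈ Icc (cr - s) (cr + s) ∧ z.im ∈ Icc (ci - s) (ci + s)}
    with hS
  have hsub : S ⊆ convexHull ℝ ({p, q, r} : Set ℂ) := by
    intro z hz
    obtain ⟨⟨h1, h2⟩, h3, h4⟩ := hz
    apply aux_square_subset_triangle hp hq hr hD
    · have h5 : (3*z - (p+q+r)).re = 3 * z.re - (p+q+r).re := by
        simp [Complex.sub_re, Complex.mul_re]
      rw [h5, abs_le]
      constructor <;> linarith
    · have h5 : (3*z - (p+q+r)).im = 3 * z.im - (p+q+r).im := by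
        simp [Complex.sub_im, Complex.mul_im]
      rw [h5, abs_le]
      constructor <;> linarith
  have hSvol : volume S = ENNReal.ofReal (2*s) * ENNReal.ofReal (2*s) := by
    have hSe : S = Complex.measurableEquivRealProd ⁻¹'
        (Icc (cr - s) (cr + s) ×ˢ Icc (ci - s) (ci + s)) := by
      ext z
      simp only [hS, Set.mem_setOf_eq, Set.mem_preimage, Complex.measurableEquivRealProd_apply,
        Set.mem_prod]
    rw [hSe, (Complex.volume_preserving_equiv_real_prod).measure_preimage
      (measurableSet_Icc.prod measurableSet_Icc).nullMeasurableSet,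
      MeasureTheory.Measure.volume_eq_prod, Measure.prod_prod, Real.volume_Icc, Real.volume_Icc]
    congr 1 <;> congr 1 <;> ring
  have h6 : ENNReal.ofReal ((D/24)^2) = ENNReal.ofReal (2*s) * ENNReal.ofReal (2*s) := by
    rw [← ENNReal.ofReal_mul (by positivity)]
    congr 1
    rw [hs]; ring
  rw [h6, ← hSvol]
  exact measure_mono hsub

-- ===== circle lemmas =====

lemma aux_comp_interval (B : Set S1) (b0 : ℝ) (hb0 : ((b0:ℝ) : S1) ∈ B) {C : Set S1} {x : S1}
    (hx : x ∈ Bᶜ) (hC : C = connectedComponentIn Bᶜ x) {ε : ℝ} (hε0 : 0 < ε)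
    (hlen : ε ≤ len C) :
    ∃ a b : ℝ, b0 ≤ a ∧ b ≤ b0 + 1 ∧ ε ≤ b - a ∧ ∀ t ∈ Ioo a b, ((t:ℝ) : S1) ∈ C := by
  classical
  set ψ : S1 → ℝ := fun y => (((AddCircle.equivIco 1 b0) y : Ico b0 (b0+1)) : ℝ) with hψ
  have hCconn : IsConnected C := by
    rw [hC]; exact (isConnected_connectedComponentIn_iff).mpr hx
  have hCsub : C ⊆ Bᶜ := hC ▸ connectedComponentIn_subset _ _
  have hb0notC : ((b0:ℝ) : S1) ∉ C := fun h => (hCsub h) hb0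
  have hψmem : ∀ y : S1, ψ y ∈ Ico b0 (b0+1) := fun y => ((AddCircle.equivIco 1 b0) y).2
  have hψproj : ∀ y : S1, ((ψ y : ℝ) : S1) = y := fun y =>
    (AddCircle.equivIco 1 b0).symm_apply_apply y
  have hcont : ContinuousOn ψ C := by
    intro y hy
    have hy' : y ≠ ((b0:ℝ) : S1) := fun h => hb0notC (h ▸ hy)
    exact (continuous_subtype_val.continuousAt.comp
      (AddCircle.continuousAt_equivIco 1 b0 hy')).continuousWithinAt
  set I : Set ℝ := ψ '' C with hI
  have hIconn : IsConnected I := hCconn.image ψ hcont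
  have hIsub : I ⊆ Ioo b0 (b0+1) := by
    rintro - ⟨y, hy, rfl⟩
    refine ⟨lt_of_le_of_ne (hψmem y).1 ?_, (hψmem y).2⟩
    intro h
    exact absurd (h ▸ hψproj y : ((b0:ℝ):S1) = y) (fun hh => hb0notC (hh ▸ hy))
  have hIne : I.Nonempty := (hCconn.nonempty).image ψ
  have hIbddA : BddAbove I := ⟨b0 + 1, fun t ht => (hIsub ht).2.le⟩
  have hIbddB : BddBelow I := ⟨b0, fun t ht => (hIsub ht).1.le⟩
  set a := sInf I with ha
  set b := sSup I with hb
  have hab0 : b0 ≤ a := le_csInf hIne (fun t ht => (hIsub ht).1.le)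
  have hbb0 : b ≤ b0 + 1 := csSup_le hIne (fun t ht => (hIsub ht).2.le)
  have hIoo : ∀ t ∈ Ioo a b, ((t:ℝ) : S1) ∈ C := by
    intro t ht
    obtain ⟨u, hu, hut⟩ := exists_lt_of_csInf_lt hIne ht.1
    obtain ⟨v, hv, htv⟩ := exists_lt_of_lt_csSup hIne ht.2
    have : t ∈ I := hIconn.isPreconnected.ordConnected.out hu hv ⟨hut.le, htv.le⟩
    obtain ⟨y, hy, rfl⟩ := this
    rw [hψproj]; exact hy
  refine ⟨a, b, hab0, hbb0, ?_, hIoo⟩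
  have hCI : C ⊆ (fun t : ℝ => ((t : ℝ) : S1)) '' Icc a b := by
    intro y hy
    exact ⟨ψ y, ⟨csInf_le hIbddB ⟨y, hy, rfl⟩, le_csSup hIbddA ⟨y, hy, rfl⟩⟩, hψproj y⟩
  have hKmeas : MeasurableSet ((fun t : ℝ => ((t : ℝ) : S1)) '' Icc a b) := by
    have : IsCompact ((fun t : ℝ => ((t : ℝ) : S1)) '' Icc a b) :=
      isCompact_Icc.image (AddCircle.continuous_mk' 1)
    exact this.isClosed.measurableSet
  have hvol : volume ((fun t : ℝ => ((t : ℝ) : S1)) '' Icc a b) ≤ ENNReal.ofReal (b - a) := by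
    have hmp := AddCircle.measurePreserving_mk (T := 1) b0
    have := hmp.measure_preimage hKmeas.nullMeasurableSet
    rw [Measure.restrict_apply₀' (measurableSet_Ioc.nullMeasurableSet)] at this
    rw [← this]
    have hsubset : (QuotientAddGroup.mk ⁻¹' ((fun t : ℝ => ((t : ℝ) : S1)) '' Icc a b))
        ∩ Ioc b0 (b0+1) ⊆ Icc a b ∪ {b0 + 1} := by
      rintro u ⟨hu1, hu⟩
      obtain ⟨s, hs, hsu⟩ := hu1
      have h7 : ((u - s : ℝ) : S1) = 0 := by
        rw [AddCircle.coe_sub]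
        have : ((u:ℝ):S1) = ((s:ℝ):S1) := hsu.symm
        rw [this, sub_self]
      obtain ⟨n, hn⟩ := (AddCircle.coe_eq_zero_iff (1:ℝ)).mp h7
      have hn' : (n : ℝ) = u - s := by rw [← hn]; simp
      have hsmem : s ∈ Icc b0 (b0+1) := ⟨le_trans hab0 hs.1, le_trans hs.2 hbb0⟩
      have hbound : (-1 : ℤ) < n ∧ n ≤ 1 := by
        constructor
        · have : (-1 : ℝ) < (n:ℝ) := by rw [hn']; have := hu.1; have := hsmem.2; linarith
          exact_mod_cast this
        · have : (n:ℝ) ≤ 1 := by rw [hn']; have := hu.2; have := hsmem.1; linarith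
          exact_mod_cast this
      have hn01 : n = 0 ∨ n = 1 := by omega
      rcases hn01 with h | h
      · left
        have : u = s := by rw [h] at hn'; push_cast at hn'; linarith
        rw [this]; exact hs
      · right
        have hus : u = s + 1 := by rw [h] at hn'; push_cast at hn'; linarith
        have hsb0 : s = b0 := by
          have h8 := hu.2
          rw [hus] at h8
          linarith [hsmem.1]
        simp [hus, hsb0]
    refine le_trans (measure_mono hsubset) ?_
    calc volume (Icc a b ∪ {b0+1}) ≤ volume (Icc a b) + volume ({b0+1} : Set ℝ) :=
          measure_union_le _ _
    _ = ENNReal.ofReal (b - a) := by rw [Real.volume_Icc, Real.volume_singleton, add_zero]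
  have hCle : ENNReal.ofReal ε ≤ volume C := ENNReal.ofReal_le_of_le_toReal hlen
  have : ENNReal.ofReal ε ≤ ENNReal.ofReal (b - a) :=
    le_trans hCle (le_trans (measure_mono hCI) hvol)
  rcases ENNReal.ofReal_le_ofReal_iff'.mp this with h | h
  · exact h
  · linarith

lemma aux_comp_eq_of_mem {B : Set S1} {C : Set S1} {x y : S1} (hx : x ∈ Bᶜ)
    (hC : C = connectedComponentIn Bᶜ x) (hy : y ∈ C) :
    C = connectedComponentIn Bᶜ y := by
  rw [hC] at hy ⊢
  exact connectedComponentIn_eq hy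

lemma aux_separator {B : Set S1} {C C' : Set S1} {x x' : S1} (hx : x ∈ Bᶜ)
    (hC : C = connectedComponentIn Bᶜ x) (hx' : x' ∈ Bᶜ)
    (hC' : C' = connectedComponentIn Bᶜ x') (hne : C ≠ C') {c c' : ℝ}
    (hc : ((c:ℝ) : S1) ∈ C) (hc' : ((c':ℝ) : S1) ∈ C') (hlt : c < c') :
    ∃ w : ℝ, c < w ∧ w < c' ∧ ((w:ℝ) : S1) ∈ B := by
  by_contra hcon
  push_neg at hcon
  have hVB : ∀ w ∈ Icc c c', ((w:ℝ) : S1) ∉ B := by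
    intro w hw hwB
    rcases eq_or_lt_of_le hw.1 with h | h
    · exact (hC ▸ connectedComponentIn_subset _ _) (h ▸ hc) hwB
    rcases eq_or_lt_of_le hw.2 with h2 | h2
    · exact (hC' ▸ connectedComponentIn_subset _ _) (h2 ▸ hc') hwB
    · exact (hcon w h h2) hwB
  set V : Set S1 := (fun t : ℝ => ((t:ℝ) : S1)) '' Icc c c' with hV
  have hVsub : V ⊆ Bᶜ := by rintro - ⟨w, hw, rfl⟩; exact hVB w hw
  have hVconn : IsPreconnected V :=
    (isPreconnected_Icc).image _ ((AddCircle.continuous_mk' 1).continuousOn)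
  have hcV : ((c:ℝ):S1) ∈ V := ⟨c, ⟨le_refl c, hlt.le⟩, rfl⟩
  have hc'V : ((c':ℝ):S1) ∈ V := ⟨c', ⟨hlt.le, le_refl c'⟩, rfl⟩
  have hCc : C = connectedComponentIn Bᶜ ((c:ℝ):S1) := aux_comp_eq_of_mem hx hC hc
  have hVC : V ⊆ C := hCc ▸ hVconn.subset_connectedComponentIn hcV hVsub
  have : ((c':ℝ):S1) ∈ C := hVC hc'V
  exact hne ((aux_comp_eq_of_mem hx hC this).trans (aux_comp_eq_of_mem hx' hC' hc').symm)

lemma aux_three_big (B : Set S1) (C : Fin 3 → Set S1)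
    (hhole : ∀ m, ∃ x ∈ Bᶜ, C m = connectedComponentIn Bᶜ x)
    (hCne : ∀ m m', m ≠ m' → C m ≠ C m')
    (hBne : B.Nonempty) {ε : ℝ} (hε0 : 0 < ε) (hlen : ∀ m, ε ≤ len (C m)) :
    ∃ u1 u2 u3 : ℝ, ((u1:ℝ):S1) ∈ B ∧ ((u2:ℝ):S1) ∈ B ∧ ((u3:ℝ):S1) ∈ B ∧
      u1 < u2 ∧ u2 < u3 ∧ u3 < u1 + 1 ∧
      ε/2 ≤ u2 - u1 ∧ ε/2 ≤ u3 - u2 ∧ ε/2 ≤ u1 + 1 - u3 := by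
  classical
  obtain ⟨x0, hx0⟩ := hBne
  set b0 : ℝ := (((AddCircle.equivIco 1 0) x0 : Ico (0:ℝ) (0+1)) : ℝ) with hb0def
  have hb0B : ((b0:ℝ):S1) ∈ B := by
    have : ((b0:ℝ):S1) = x0 := (AddCircle.equivIco 1 0).symm_apply_apply x0
    rw [this]; exact hx0
  choose xx hxx hCxx using hhole
  choose a b hba hbb hblen hbmem using
    (fun m => aux_comp_interval B b0 hb0B (hxx m) (hCxx m) hε0 (hlen m))
  have hlt : ∀ m, a m < b m := fun m => by have := hblen m; linarith
  have hIdisj : ∀ m m', m ≠ m' → ∀ t : ℝ, t ∈ Ioo (a m) (b m) → t ∉ Ioo (a m') (b m') := by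
    intro m m' hne t ht ht'
    have h1 : ((t:ℝ):S1) ∈ C m := hbmem m t ht
    have h2 : ((t:ℝ):S1) ∈ C m' := hbmem m' t ht'
    exact hCne m m' hne
      ((aux_comp_eq_of_mem (hxx m) (hCxx m) h1).trans
        (aux_comp_eq_of_mem (hxx m') (hCxx m') h2).symm)
  have hord : ∀ m m', m ≠ m' → b m ≤ a m' ∨ b m' ≤ a m := by
    intro m m' hne
    by_contra hcon
    push_neg at hcon
    set t := max (a m) (a m') + (min (b m) (b m') - max (a m) (a m'))/2 with htdef
    have h1 : max (a m) (a m') < min (b m) (b m') := by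
      rcases max_cases (a m) (a m') with ⟨h, _⟩ | ⟨h, _⟩ <;>
        rcases min_cases (b m) (b m') with ⟨h2, _⟩ | ⟨h2, _⟩ <;>
        rw [h, h2] <;> first | exact hlt m | exact hlt m' | exact hcon.2 | exact hcon.1
    have ht1 : t ∈ Ioo (a m) (b m) := by
      constructor
      · have := le_max_left (a m) (a m'); simp only [htdef]; linarith
      · have := min_le_left (b m) (b m'); simp only [htdef]; linarith
    have ht2 : t ∈ Ioo (a m') (b m') := by
      constructor
      · have := le_max_right (a m) (a m'); simp only [htdef]; linarith
      · have := min_le_right (b m) (b m'); simp only [htdef]; linarith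
    exact hIdisj m m' hne t ht1 ht2
  have key : ∀ m1 m2 m3 : Fin 3, m1 ≠ m2 → m1 ≠ m3 → m2 ≠ m3 →
      b m1 ≤ a m2 → b m2 ≤ a m3 →
      ∃ u1 u2 u3 : ℝ, ((u1:ℝ):S1) ∈ B ∧ ((u2:ℝ):S1) ∈ B ∧ ((u3:ℝ):S1) ∈ B ∧
        u1 < u2 ∧ u2 < u3 ∧ u3 < u1 + 1 ∧
        ε/2 ≤ u2 - u1 ∧ ε/2 ≤ u3 - u2 ∧ ε/2 ≤ u1 + 1 - u3 := by
    intro m1 m2 m3 h12 h13 h23 hb12 hb23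
    set δ := ε/4 with hδdef
    have hδ0 : 0 < δ := by positivity
    have hmem1 : b m1 - min δ ((b m1 - a m1)/2) ∈ Ioo (a m1) (b m1) := by
      constructor
      · have h5 := min_le_right δ ((b m1 - a m1)/2); have := hlt m1; linarith
      · have h5 := lt_min hδ0 (by linarith [hlt m1] : (0:ℝ) < (b m1 - a m1)/2); linarith
    have hmem2l : a m2 + min δ ((b m2 - a m2)/2) ∈ Ioo (a m2) (b m2) := by
      constructor
      · have h5 := lt_min hδ0 (by linarith [hlt m2] : (0:ℝ) < (b m2 - a m2)/2); linarith
      · have h5 := min_le_right δ ((b m2 - a m2)/2); have := hlt m2; linarith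
    have hmem2r : b m2 - min δ ((b m2 - a m2)/2) ∈ Ioo (a m2) (b m2) := by
      constructor
      · have h5 := min_le_right δ ((b m2 - a m2)/2); have := hlt m2; linarith
      · have h5 := lt_min hδ0 (by linarith [hlt m2] : (0:ℝ) < (b m2 - a m2)/2); linarith
    have hmem3 : a m3 + min δ ((b m3 - a m3)/2) ∈ Ioo (a m3) (b m3) := by
      constructor
      · have h5 := lt_min hδ0 (by linarith [hlt m3] : (0:ℝ) < (b m3 - a m3)/2); linarith
      · have h5 := min_le_right δ ((b m3 - a m3)/2); have := hlt m3; linarith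
    obtain ⟨w12, hw12l, hw12r, hw12B⟩ := aux_separator (hxx m1) (hCxx m1) (hxx m2) (hCxx m2)
      (hCne m1 m2 h12) (hbmem m1 _ hmem1) (hbmem m2 _ hmem2l)
      (by have := hmem1.2; have := hmem2l.1; linarith)
    obtain ⟨w23, hw23l, hw23r, hw23B⟩ := aux_separator (hxx m2) (hCxx m2) (hxx m3) (hCxx m3)
      (hCne m2 m3 h23) (hbmem m2 _ hmem2r) (hbmem m3 _ hmem3)
      (by have := hmem2r.2; have := hmem3.1; linarith)
    refine ⟨b0, w12, w23, hb0B, hw12B, hw23B, ?_, ?_, ?_, ?_, ?_, ?_⟩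
    · have := hba m1; have := hmem1.1; linarith
    · have h5 := min_le_left δ ((b m2 - a m2)/2)
      have := hblen m2
      linarith [hw12r, hw23l]
    · have h5 := min_le_left δ ((b m3 - a m3)/2)
      have := hbb m3; have := hlt m3
      have h7 := min_le_right δ ((b m3 - a m3)/2)
      linarith [hw23r]
    · have h5 := min_le_left δ ((b m1 - a m1)/2)
      have := hblen m1; have := hba m1
      linarith [hw12l]
    · have h5 := min_le_left δ ((b m2 - a m2)/2)
      have := hblen m2
      linarith [hw12r, hw23l]
    · have h5 := min_le_left δ ((b m3 - a m3)/2)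
      have := hblen m3; have := hbb m3
      linarith [hw23r]
  have d01 : (0:Fin 3) ≠ 1 := by decide
  have d02 : (0:Fin 3) ≠ 2 := by decide
  have d12 : (1:Fin 3) ≠ 2 := by decide
  rcases hord 0 1 d01 with h01 | h10 <;> rcases hord 1 2 d12 with h12 | h21 <;>
    rcases hord 0 2 d02 with h02 | h20
  · exact key 0 1 2 d01 d02 d12 h01 h12
  · exact absurd rfl (by have := hlt 0; have := hlt 1; have := hlt 2; intro _; linarith
      : ¬(0:ℕ)=0)
  · exact key 0 2 1 d02 d01 (Ne.symm d12) h02 h21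
  · exact key 2 0 1 (Ne.symm d02) (Ne.symm d12) d01 h20 h01
  · exact key 1 0 2 (Ne.symm d01) d12 d02 h10 h02
  · exact key 1 2 0 d12 (Ne.symm d01) (Ne.symm d02) h12 h20
  · exact absurd rfl (by have := hlt 0; have := hlt 1; have := hlt 2; intro _; linarith
      : ¬(0:ℕ)=0)
  · exact key 2 1 0 (Ne.symm d12) (Ne.symm d02) (Ne.symm d01) h21 h10

lemma aux_emb_coe (u : ℝ) : emb ((u:ℝ) : S1) = Complex.exp ((2*Real.pi*u : ℝ) * Complex.I) := by
  rw [emb, AddCircle.toCircle_apply_mk, Circle.coe_exp]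
  norm_num

lemma aux_emb_abs (x : S1) : ‖emb x‖ = 1 := Circle.norm_coe _

lemma aux_CH_vol_lb (B : Set S1) {u1 u2 u3 η : ℝ}
    (h1 : ((u1:ℝ):S1) ∈ B) (h2 : ((u2:ℝ):S1) ∈ B) (h3 : ((u3:ℝ):S1) ∈ B)
    (hg1 : η ≤ u2 - u1) (hg2 : η ≤ u3 - u2) (hg3 : η ≤ u1 + 1 - u3)
    (hη : 0 < η) (hη2 : η ≤ 1/2) :
    ENNReal.ofReal ((4 * Real.sin (Real.pi * η)^3 / 24)^2) ≤ volume (CH B) := by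
  have hπ := Real.pi_pos
  set p := emb ((u1:ℝ):S1) with hp
  set q := emb ((u2:ℝ):S1) with hq
  set r := emb ((u3:ℝ):S1) with hr
  have hD : det2 (q - p) (r - p) =
      4 * Real.sin (Real.pi * (u2-u1)) * Real.sin (Real.pi * (u3-u2)) *
        Real.sin (Real.pi * (u3-u1)) := by
    rw [hp, hq, hr, aux_emb_coe, aux_emb_coe, aux_emb_coe, aux_det2_exp]
    congr 2
    · congr 2 <;> ring
    · ring_nf
    · ring_nf
  set s0 := Real.sin (Real.pi * η) with hs0
  have hs0pos : 0 < s0 := Real.sin_pos_of_pos_of_lt_pi (by positivity) (by nlinarith)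
  have hb1 : s0 ≤ Real.sin (Real.pi * (u2-u1)) :=
    aux_sin_lb (by positivity) (by nlinarith) (by nlinarith) (by nlinarith)
  have hb2 : s0 ≤ Real.sin (Real.pi * (u3-u2)) :=
    aux_sin_lb (by positivity) (by nlinarith) (by nlinarith) (by nlinarith)
  have hb3 : s0 ≤ Real.sin (Real.pi * (u3-u1)) :=
    aux_sin_lb (by positivity) (by nlinarith) (by nlinarith) (by nlinarith)
  have e1 : 0 < Real.sin (Real.pi * (u2-u1)) := lt_of_lt_of_le hs0pos hb1
  have e2 : 0 < Real.sin (Real.pi * (u3-u2)) := lt_of_lt_of_le hs0pos hb2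
  have e3 : 0 < Real.sin (Real.pi * (u3-u1)) := lt_of_lt_of_le hs0pos hb3
  have hDpos : 0 < det2 (q-p) (r-p) := by rw [hD]; positivity
  have hDlb : 4 * s0^3 ≤ det2 (q-p) (r-p) := by
    rw [hD]
    have m1 : s0*s0 ≤ Real.sin (Real.pi * (u2-u1)) * Real.sin (Real.pi * (u3-u2)) :=
      mul_le_mul hb1 hb2 hs0pos.le e1.le
    have m2 : (s0*s0)*s0 ≤ (Real.sin (Real.pi * (u2-u1)) * Real.sin (Real.pi * (u3-u2))) *
        Real.sin (Real.pi * (u3-u1)) := mul_le_mul m1 hb3 hs0pos.le (by positivity)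
    nlinarith [m2]
  have hsub : ({p, q, r} : Set ℂ) ⊆ emb '' B := by
    intro z hz
    simp only [Set.mem_insert_iff, Set.mem_singleton_iff] at hz
    rcases hz with rfl | rfl | rfl
    · exact ⟨_, h1, rfl⟩
    · exact ⟨_, h2, rfl⟩
    · exact ⟨_, h3, rfl⟩
  refine le_trans ?_ (le_trans (aux_volume_triangle_lb (le_of_eq (aux_emb_abs _))
    (le_of_eq (aux_emb_abs _)) (le_of_eq (aux_emb_abs _)) hDpos)
    (measure_mono (convexHull_mono hsub)))
  apply ENNReal.ofReal_le_ofReal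
  have h9 : 4 * s0^3 / 24 ≤ det2 (q-p) (r-p) / 24 := by linarith
  have h10 : (0:ℝ) ≤ 4 * s0^3/24 := by positivity
  nlinarith [h9, h10]

lemma aux_finite_bad (V : ℕ → Set ℂ) (hmeas : ∀ i, MeasurableSet (V i))
    (hsub : ∀ i, V i ⊆ Metric.closedBall (0:ℂ) 1)
    (hdisj : ∀ i j, i ≠ j → Disjoint (V i) (V j))
    {c : ℝ} (hc : 0 < c) (S : Set ℕ) (hvol : ∀ i ∈ S, ENNReal.ofReal c ≤ volume (V i)) :
    S.Finite := by
  by_contra hinf0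
  have hinf : S.Infinite := hinf0
  set K := volume (Metric.closedBall (0:ℂ) 1) with hK
  have hKfin : K ≠ ⊤ := (measure_closedBall_lt_top).ne
  set n : ℕ := ⌈K.toReal / c⌉₊ + 1 with hn
  obtain ⟨t, htS, htfin, htcard⟩ := hinf.exists_subset_ncard_eq n
  set F := htfin.toFinset with hF
  have hFcard : F.card = n := by
    rw [← htcard, ← Set.ncard_coe_finset F, hF, htfin.coe_toFinset]
  have hFS : ∀ i ∈ F, i ∈ S := fun i hi => htS (htfin.mem_toFinset.mp hi)
  have hsum : (n : ENNReal) * ENNReal.ofReal c ≤ ∑ i ∈ F, volume (V i) := by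
    calc (n : ENNReal) * ENNReal.ofReal c = F.card • ENNReal.ofReal c := by
          rw [hFcard, nsmul_eq_mul]
    _ ≤ ∑ i ∈ F, volume (V i) := Finset.card_nsmul_le_sum F _ _ (fun i hi => hvol i (hFS i hi))
  have hU : ∑ i ∈ F, volume (V i) ≤ K := by
    rw [← measure_biUnion_finset (fun i _ j _ hij => hdisj i j hij) (fun i _ => hmeas i)]
    exact measure_mono (Set.iUnion₂_subset fun i _ => hsub i)
  have hfinal : (n : ENNReal) * ENNReal.ofReal c ≤ K := le_trans hsum hU
  have : ENNReal.ofReal ((n:ℝ) * c) ≤ K := by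
    rwa [ENNReal.ofReal_mul (by positivity), ENNReal.ofReal_natCast]
  have h2 : (n:ℝ) * c ≤ K.toReal := (ENNReal.ofReal_le_iff_le_toReal hKfin).mp this
  have h3 : K.toReal / c < n := by
    rw [hn]; push_cast
    exact lt_of_le_of_lt (Nat.le_ceil _) (by linarith)
  rw [div_lt_iff₀ hc] at h3
  linarith

/-- the N-2 smallest holes of a wandering N-gon have lengths tending to 0. -/
theorem stmt5 (d N : ℕ) (hd : 2 ≤ d) (hN : 3 ≤ N) (T : Set S1)
    (hw : Wandering d N T)
    (H : ℕ → Fin N → Set S1)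
    (hH : ∀ i, IsHoleEnum ((fd d)^[i] '' T) (H i)) :
    ∀ k : Fin N, (k : ℕ) < N - 2 →
      Tendsto (fun i => len (H i k)) atTop (nhds 0) := by
  intro k hk
  have hπ := Real.pi_pos
  rw [Metric.tendsto_atTop]
  intro ε hε
  set η : ℝ := min (ε/2) (1/4) with hηdef
  have hη0 : 0 < η := lt_min (by linarith) (by norm_num)
  have hη4 : η ≤ 1/4 := min_le_right _ _
  have hηε : η ≤ ε/2 := min_le_left _ _
  set s0 := Real.sin (Real.pi * (η/2)) with hs0
  have hs0pos : 0 < s0 := Real.sin_pos_of_pos_of_lt_pi (by positivity) (by nlinarith)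
  set c0 : ℝ := (4 * s0^3 / 24)^2 with hc0
  have hc0pos : 0 < c0 := by positivity
  set Bs : ℕ → Set S1 := fun i => (fd d)^[i] '' T with hBs
  set V : ℕ → Set ℂ := fun i => CH (Bs i) with hV
  have hBcard : ∀ i, (Bs i).ncard = N := fun i => (hw i 0).1
  have hBfin : ∀ i, (Bs i).Finite := by
    intro i
    apply Set.finite_of_ncard_ne_zero
    rw [hBcard i]
    omega
  have hBne : ∀ i, (Bs i).Nonempty := fun i =>
    Set.nonempty_of_ncard_ne_zero (by rw [hBcard i]; omega)
  have hVmeas : ∀ i, MeasurableSet (V i) := by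
    intro i
    have hfin : (emb '' Bs i).Finite := (hBfin i).image _
    exact ((hfin.isCompact_convexHull ℝ).isClosed).measurableSet
  have hVsub : ∀ i, V i ⊆ Metric.closedBall (0:ℂ) 1 := by
    intro i
    apply convexHull_min _ (convex_closedBall _ _)
    rintro - ⟨x, hx, rfl⟩
    rw [Metric.mem_closedBall, Complex.dist_eq, sub_zero, aux_emb_abs]
  have hVdisj : ∀ i j, i ≠ j → Disjoint (V i) (V j) := fun i j hij => (hw i j).2 hij
  set S : Set ℕ := {i | η ≤ len (H i k)} with hSdef
  have hSfin : S.Finite := by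
    apply aux_finite_bad V hVmeas hVsub hVdisj hc0pos
    intro i hi
    obtain ⟨hinj, hholes, hsurj, hmono⟩ := hH i
    set k1 : Fin N := ⟨N-3, by omega⟩ with hk1
    set k2 : Fin N := ⟨N-2, by omega⟩ with hk2
    set k3 : Fin N := ⟨N-1, by omega⟩ with hk3
    have hkk1 : k ≤ k1 := by rw [Fin.le_def]; simp only [hk1]; omega
    have hkk2 : k ≤ k2 := by rw [Fin.le_def]; simp only [hk2]; omega
    have hkk3 : k ≤ k3 := by rw [Fin.le_def]; simp only [hk3]; omega
    have hδ12 : k1 ≠ k2 := by simp only [hk1, hk2, Fin.ne_iff_vne]; omega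
    have hδ13 : k1 ≠ k3 := by simp only [hk1, hk3, Fin.ne_iff_vne]; omega
    have hδ23 : k2 ≠ k3 := by simp only [hk2, hk3, Fin.ne_iff_vne]; omega
    obtain ⟨u1, u2, u3, hu1, hu2, hu3, _, _, _, hg1, hg2, hg3⟩ :=
      aux_three_big (Bs i) ![H i k1, H i k2, H i k3]
        (by
          intro m
          fin_cases m
          · exact hholes k1
          · exact hholes k2
          · exact hholes k3)
        (by
          intro m m' hmm
          fin_cases m <;> fin_cases m' <;>
            first
              | exact absurd rfl hmm
              | exact fun h => hδ12 (hinj h)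
              | exact fun h => hδ13 (hinj h)
              | exact fun h => hδ23 (hinj h)
              | exact fun h => hδ12 (hinj h.symm)
              | exact fun h => hδ13 (hinj h.symm)
              | exact fun h => hδ23 (hinj h.symm))
        (hBne i) hη0
        (by
          intro m
          fin_cases m
          · exact le_trans hi (hmono k k1 hkk1)
          · exact le_trans hi (hmono k k2 hkk2)
          · exact le_trans hi (hmono k k3 hkk3))
    exact aux_CH_vol_lb (Bs i) hu1 hu2 hu3 hg1 hg2 hg3 (by positivity) (by linarith)
  obtain ⟨M, hM⟩ := hSfin.bddAbove
  refine ⟨M + 1, fun i hiM => ?_⟩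
  have hiS : i ∉ S := fun h => by have := hM h; omega
  have hlen : len (H i k) < η := by
    by_contra hcon
    push_neg at hcon
    exact hiS hcon
  have hnn : 0 ≤ len (H i k) := ENNReal.toReal_nonneg
  rw [Real.dist_eq, sub_zero, abs_of_nonneg hnn]
  linarith
end
end
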